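/- Let ℍ be the real quaternions with imaginary units i, j, k, let n ≥ 1, and let 𝔤 = sp(n+1) ⊕ ℝ, where sp(n+1) = {A ∈ ℍ^{(n+1)×(n+1)} : A + conj(A)ᵗ = 0} with the commutator bracket and the ℝ-summand is central, equipped with the invariant inner product ⟨(A,a),(B,b)⟩ = −Re(tr(A·B)) + a·b. Let 𝔥 = {(diag(C, a·i), a) : C ∈ sp(n), a ∈ ℝ}, let 𝔪 = 𝔥^⊥, and 𝔪₀ = {(diag(0_n, a·i), −a) : a ∈ ℝ}. If X ∈ 𝔪 satisfies ⁅X, v⁆ ∈ 𝔥 for every v ∈ 𝔪₀, then X ∈ 𝔪₀. -/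

import Mathlib

open Matrix

/-- The quaternion imaginary unit `i`. -/
noncomputable def qi : Quaternion ℝ := ⟨0, 1, 0, 0⟩

lemma qi_re : qi.re = 0 := rfl
lemma qi_imI : qi.imI = 1 := rfl
lemma qi_imJ : qi.imJ = 0 := rfl
lemma qi_imK : qi.imK = 0 := rfl

/-- The ambient Lie algebra: quaternionic `(n+1)×(n+1)` matrices (with the commutator
bracket) times a central copy of `ℝ`.  The Lie algebra `𝔤 = sp(n+1) ⊕ ℝ` is the
subalgebra of pairs `(A, a)` with `A + conj(A)ᵗ = 0`. -/

lemma re_sum {α} (s : Finset α) (f : α → Quaternion ℝ) :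
    (∑ x ∈ s, f x).re = ∑ x ∈ s, (f x).re :=
  map_sum (QuaternionAlgebra.reₗ _ _ _) f s

lemma qi_mul_qi : qi * qi = -1 := by
  ext <;> simp [qi_re, qi_imI, qi_imJ, qi_imK, Quaternion.ext_iff, Quaternion.re_mul, Quaternion.imI_mul,
    Quaternion.imJ_mul, Quaternion.imK_mul, Quaternion.re_one, Quaternion.imI_one,
    Quaternion.imJ_one, Quaternion.imK_one]

lemma mul_qi_eq_zero {q : Quaternion ℝ} (h : q * qi = 0) : q = 0 := by
  have := congrArg (· * qi) h
  simpa [mul_assoc, qi_mul_qi] using this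

lemma qi_mul_eq_zero {q : Quaternion ℝ} (h : qi * q = 0) : q = 0 := by
  have := congrArg (qi * ·) h
  simpa [← mul_assoc, qi_mul_qi] using this

lemma eq_smul_qi {q : Quaternion ℝ} (hre : q.re = 0)
    (h : q * qi - qi * q = 0) : q = q.imI • qi := by
  rw [Quaternion.ext_iff] at h ⊢
  simp [qi_re, qi_imI, qi_imJ, qi_imK, Quaternion.re_mul, Quaternion.imI_mul, Quaternion.imJ_mul,
    Quaternion.imK_mul, Quaternion.re_zero, Quaternion.imI_zero, Quaternion.imJ_zero, Quaternion.imK_zero] at h ⊢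
  refine ⟨hre, ?_, ?_⟩ <;> linarith [h.1, h.2]

lemma re_mul_qi (q : Quaternion ℝ) : (q * qi).re = -q.imI := by
  simp [qi_re, qi_imI, qi_imJ, qi_imK, Quaternion.re_mul]

abbrev SpU (n : ℕ) := Matrix (Fin (n + 1)) (Fin (n + 1)) (Quaternion ℝ) × ℝ

/-- The invariant inner product `⟨(A,a),(B,b)⟩ = −Re(tr(A·B)) + a·b`. -/
noncomputable def ipSpU (n : ℕ) (x y : SpU n) : ℝ := -((x.1 * y.1).trace).re + x.2 * y.2

/-- **Key step for `S^{4n+3} = Sp(n+1)U(1)/Sp(n)U(1)`.**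
Here `𝔤 = sp(n+1) ⊕ ℝ` with the invariant inner product
`⟨(A,a),(B,b)⟩ = −Re(tr(A·B)) + a·b`,
`𝔥 = {(diag(C, a·i), a) : C ∈ sp(n), a ∈ ℝ}`, `𝔪 = 𝔥ᗮ` (inside `𝔤`) and
`𝔪₀ = {(diag(0_n, a·i), −a) : a ∈ ℝ}`.  If `X ∈ 𝔪` satisfies `⁅X, v⁆ ∈ 𝔥` for every
`v ∈ 𝔪₀`, then `X ∈ 𝔪₀`. -/
theorem mem_m0_of_bracket_m0_mem_h
    (n : ℕ) (hn : 1 ≤ n)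
    (𝔥 : Submodule ℝ (SpU n))
    (h𝔥 : ∀ x : SpU n, x ∈ 𝔥 ↔
      (x.1 + x.1ᴴ = 0 ∧
        (∀ p : Fin (n + 1), p ≠ Fin.last n →
          x.1 p (Fin.last n) = 0 ∧ x.1 (Fin.last n) p = 0) ∧
        x.1 (Fin.last n) (Fin.last n) = x.2 • qi))
    (𝔪 : Submodule ℝ (SpU n))
    (h𝔪 : ∀ x : SpU n, x ∈ 𝔪 ↔ (x.1 + x.1ᴴ = 0 ∧ ∀ w ∈ 𝔥, ipSpU n x w = 0))
    (𝔪₀ : Submodule ℝ (SpU n))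
    (h𝔪₀ : ∀ x : SpU n, x ∈ 𝔪₀ ↔
      ((∀ p q : Fin (n + 1), ¬(p = Fin.last n ∧ q = Fin.last n) → x.1 p q = 0) ∧
        x.1 (Fin.last n) (Fin.last n) = (-x.2) • qi)) :
    ∀ X ∈ 𝔪, (∀ v ∈ 𝔪₀, ⁅X, v⁆ ∈ 𝔥) → X ∈ 𝔪₀ := by
  intro X hXm hbr
  obtain ⟨hskew, horth⟩ := (h𝔪 X).mp hXm
  set l := Fin.last n with hl
  have hsk : ∀ p q, X.1 q p = -star (X.1 p q) := by
    intro p q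
    have := congrFun (congrFun hskew q) p
    simp only [Matrix.add_apply, Matrix.conjTranspose_apply, Matrix.zero_apply] at this
    exact eq_neg_of_add_eq_zero_left this
  -- the matrix E = diag(0,…,0, i)
  set E : Matrix (Fin (n+1)) (Fin (n+1)) (Quaternion ℝ) :=
    Matrix.of fun p q => if p = l ∧ q = l then qi else 0 with hE
  have hmulE : ∀ p q, (X.1 * E) p q = if q = l then X.1 p l * qi else 0 := by
    intro p q
    by_cases hq : q = l
    · subst hq
      simp [Matrix.mul_apply, hE, mul_ite, Finset.sum_ite_eq]
    · simp [Matrix.mul_apply, hE, hq]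
  have hEmul : ∀ p q, (E * X.1) p q = if p = l then qi * X.1 l q else 0 := by
    intro p q
    by_cases hp : p = l
    · subst hp
      simp [Matrix.mul_apply, hE, ite_mul, Finset.sum_ite_eq]
    · simp [Matrix.mul_apply, hE, hp]
  -- the element (E, -1) lies in 𝔪₀
  have hvmem : ((E, (-1 : ℝ)) : SpU n) ∈ 𝔪₀ := by
    rw [h𝔪₀]
    refine ⟨fun p q hpq => ?_, ?_⟩
    · simp [hE, hpq]
    · simp [hE]
  obtain ⟨-, hoff, hll⟩ := (h𝔥 _).mp (hbr _ hvmem)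
  have hbr1 : (⁅X, ((E, (-1 : ℝ)) : SpU n)⁆ : SpU n).1 = X.1 * E - E * X.1 := rfl
  have hbr2 : (⁅X, ((E, (-1 : ℝ)) : SpU n)⁆ : SpU n).2 = 0 := by
    show X.2 * (-1) - (-1) * X.2 = 0; ring
  -- off-diagonal entries in last row/column vanish
  have hcol : ∀ p, p ≠ l → X.1 p l = 0 := by
    intro p hp
    have h1 := (hoff p hp).1
    rw [hbr1] at h1
    simp only [Matrix.sub_apply, hmulE, hEmul, if_pos rfl, if_neg hp] at h1
    exact mul_qi_eq_zero (by simpa using h1)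
  have hrow : ∀ p, p ≠ l → X.1 l p = 0 := by
    intro p hp
    have h1 := (hoff p hp).2
    rw [hbr1] at h1
    simp only [Matrix.sub_apply, hmulE, hEmul, if_pos rfl, if_neg hp] at h1
    refine qi_mul_eq_zero (q := X.1 l p) ?_
    simpa using congrArg Neg.neg h1
  -- the corner entry commutes with qi and has zero real part
  have hcorner : X.1 l l * qi - qi * X.1 l l = 0 := by
    have h1 := hll
    rw [hbr1, hbr2] at h1
    simpa [Matrix.sub_apply, hmulE, hEmul] using h1
  have hre0 : (X.1 l l).re = 0 := by
    have := congrFun (congrFun hskew l) l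
    simp only [Matrix.add_apply, Matrix.conjTranspose_apply, Matrix.zero_apply] at this
    have := congrArg QuaternionAlgebra.re this
    simp [Quaternion.re_zero] at this
    linarith
  have hcornerI : X.1 l l = (X.1 l l).imI • qi := eq_smul_qi hre0 hcorner
  -- the imI of the corner is -X.2, via orthogonality with (E, 1) ∈ 𝔥
  have hEh : ((E, (1 : ℝ)) : SpU n) ∈ 𝔥 := by
    rw [h𝔥]
    refine ⟨?_, fun p hp => ⟨by simp [hE, hp], by simp [hE, hp]⟩, by simp [hE]⟩
    funext p q
    by_cases h : p = l ∧ q = l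
    · obtain ⟨rfl, rfl⟩ := h
      simp [hE, Quaternion.ext_iff, qi_re, qi_imI, qi_imJ, qi_imK, Quaternion.re_zero, Quaternion.imI_zero, Quaternion.imJ_zero, Quaternion.imK_zero]
    · have h' : ¬(q = l ∧ p = l) := fun hc => h ⟨hc.2, hc.1⟩
      simp [hE, Matrix.conjTranspose_apply, h, h']
  have himI : (X.1 l l).imI = -X.2 := by
    have h1 := horth _ hEh
    unfold ipSpU at h1
    have htr : ((X.1 * E).trace) = X.1 l l * qi := by
      rw [Matrix.trace]
      have : ∀ p, (X.1 * E).diag p = if p = l then X.1 p l * qi else 0 := fun p => hmulE p p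
      rw [Finset.sum_congr rfl fun p _ => this p]
      simp
    rw [htr, re_mul_qi] at h1
    simp only [mul_one, neg_neg] at h1
    linarith
  -- the upper-left block vanishes, via orthogonality with (B, 0) ∈ 𝔥
  set B : Matrix (Fin (n+1)) (Fin (n+1)) (Quaternion ℝ) :=
    Matrix.of fun p q => if p = l ∨ q = l then 0 else X.1 p q with hB
  have hBh : ((B, (0 : ℝ)) : SpU n) ∈ 𝔥 := by
    rw [h𝔥]
    refine ⟨?_, fun p hp => ⟨by simp [hB], by simp [hB]⟩, by simp [hB]⟩
    funext p q
    by_cases h : p = l ∨ q = l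
    · have h' : q = l ∨ p = l := h.symm
      simp [hB, Matrix.conjTranspose_apply, h, h']
    · push_neg at h
      have h' : ¬(q = l ∨ p = l) := by tauto
      have h'' : ¬(p = l ∨ q = l) := by tauto
      simp only [Matrix.add_apply, Matrix.conjTranspose_apply, hB, Matrix.of_apply,
        if_neg h'', if_neg h', Matrix.zero_apply]
      rw [hsk q p]
      simp
  have hblock : ∀ p q, p ≠ l → q ≠ l → X.1 p q = 0 := by
    have h1 := horth _ hBh
    unfold ipSpU at h1
    have htr : ((X.1 * B).trace).re
        = -∑ p, ∑ k, (if p = l ∨ k = l then 0 else Quaternion.normSq (X.1 p k)) := by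
      rw [Matrix.trace, re_sum]
      rw [← Finset.sum_neg_distrib]
      refine Finset.sum_congr rfl fun p _ => ?_
      rw [Matrix.diag_apply, Matrix.mul_apply, re_sum, ← Finset.sum_neg_distrib]
      refine Finset.sum_congr rfl fun k _ => ?_
      by_cases h : p = l ∨ k = l
      · have h' : k = l ∨ p = l := h.symm
        simp [hB, h', h, Quaternion.re_zero]
      · have h' : ¬(k = l ∨ p = l) := fun hc => h hc.symm
        simp only [hB, Matrix.of_apply, if_neg h', if_neg h]
        rw [hsk p k]
        simp [Quaternion.self_mul_star, mul_neg]
    rw [htr] at h1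
    simp only [mul_zero, add_zero, neg_neg] at h1
    intro p q hp hq
    have hnn : ∀ p ∈ (Finset.univ : Finset (Fin (n+1))),
        (0:ℝ) ≤ ∑ k, (if p = l ∨ k = l then 0 else Quaternion.normSq (X.1 p k)) := by
      intro p _
      refine Finset.sum_nonneg fun k _ => ?_
      split <;> [rfl; exact Quaternion.normSq_nonneg]
    have h2 := (Finset.sum_eq_zero_iff_of_nonneg hnn).mp h1 p (Finset.mem_univ p)
    have hnn2 : ∀ k ∈ (Finset.univ : Finset (Fin (n+1))),
        (0:ℝ) ≤ (if p = l ∨ k = l then 0 else Quaternion.normSq (X.1 p k)) := by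
      intro k _
      split <;> [rfl; exact Quaternion.normSq_nonneg]
    have h3 := (Finset.sum_eq_zero_iff_of_nonneg hnn2).mp h2 q (Finset.mem_univ q)
    rw [if_neg (by tauto)] at h3
    exact Quaternion.normSq_eq_zero.mp h3
  -- conclude
  rw [h𝔪₀]
  refine ⟨fun p q hpq => ?_, ?_⟩
  · by_cases hp : p = l
    · subst hp
      exact hrow q (fun hc => hpq ⟨rfl, hc⟩)
    · by_cases hq : q = l
      · subst hq; exact hcol p hp
      · exact hblock p q hp hq
  · rw [hcornerI, himI]
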